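/- Let X_1, ..., X_n be i.i.d. Bernoulli(p) random variables and let Y_1, ..., Y_{cn} be arbitrary Bernoulli (0/1-valued) random variables, where c > 0 and cn is an integer. Let S_n = Σ X_i + Σ Y_i, r ≥ 0, m = max{0, p−r}, M = min{1, p+r}. If r' := p − m(1+c) ≥ 0 and r'' := M(1+c) − (p+c) ≥ 0, then P( |S_n/(n(1+c)) − p| ≥ r ) ≤ exp( −n r'² / (2p(1−p) + 2r'/3) ) + exp( −n r''² / (2p(1−p) + 2r''/3) ). -/

import Mathlib

open MeasureTheory ProbabilityTheory

section AuxScalar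
open Real Nat

-- exp as tail series
lemma exp_sub_one_sub_eq (x : ℝ) :
    Real.exp x - 1 - x = ∑' k : ℕ, x ^ (k + 2) / (k + 2)! := by
  have hs : Summable (fun n : ℕ => x ^ n / n !) := Real.summable_pow_div_factorial x
  have h0 : Real.exp x = ∑' n : ℕ, x ^ n / n ! := by
    rw [Real.exp_eq_exp_ℝ, NormedSpace.exp_eq_tsum_div]
  rw [h0, hs.tsum_eq_zero_add]
  have hs1 : Summable (fun n : ℕ => x ^ (n + 1) / (n + 1)!) := by
    exact (summable_nat_add_iff 1).2 hs
  rw [hs1.tsum_eq_zero_add]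
  simp [Nat.factorial]

lemma fact_ge (k : ℕ) : 2 * 3 ^ k ≤ (k + 2)! := by
  induction k with
  | zero => simp [Nat.factorial]
  | succ n ih =>
      have : (n + 3)! = (n + 3) * (n + 2)! := rfl
      calc 2 * 3 ^ (n + 1) = 3 * (2 * 3 ^ n) := by ring
        _ ≤ 3 * (n + 2)! := by omega
        _ ≤ (n + 3) * (n + 2)! := by
            have : (3:ℕ) ≤ n + 3 := by omega
            exact Nat.mul_le_mul_right _ this
        _ = (n + 3)! := rfl

lemma exp_bound_lt3 {t : ℝ} (h0 : 0 ≤ t) (h3 : t < 3) :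
    Real.exp t - 1 - t ≤ t ^ 2 / 2 * (1 / (1 - t / 3)) := by
  rw [exp_sub_one_sub_eq]
  have hgeo : Summable (fun k : ℕ => t ^ 2 / 2 * (t / 3) ^ k) := by
    apply Summable.mul_left
    exact summable_geometric_of_lt_one (by positivity) (by linarith)
  have hsum : Summable (fun k : ℕ => t ^ (k + 2) / (k + 2)!) := by
    exact (summable_nat_add_iff 2).2 (Real.summable_pow_div_factorial t)
  calc ∑' k : ℕ, t ^ (k + 2) / (k + 2)!
      ≤ ∑' k : ℕ, t ^ 2 / 2 * (t / 3) ^ k := by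
        apply Summable.tsum_le_tsum _ hsum hgeo
        intro k
        have h1 : t ^ (k + 2) = t ^ 2 * t ^ k := by ring
        have h2 : (0:ℝ) < (k + 2)! := by positivity
        rw [h1, div_le_iff₀ h2]
        have key : (2:ℝ) * 3 ^ k ≤ (k + 2)! := by
          exact_mod_cast fact_ge k
        have htk : t ^ k ≤ 3 ^ k := pow_le_pow_left₀ h0 (by linarith) k
        have e1 : t ^ 2 / 2 * (t / 3) ^ k * (k + 2)! =
            t ^ 2 * t ^ k * ((k + 2)! / (2 * 3 ^ k)) := by
          rw [div_pow]
          ring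
        rw [e1]
        have h3k : (0:ℝ) < 2 * 3 ^ k := by positivity
        have : (1:ℝ) ≤ (k + 2)! / (2 * 3 ^ k) := (one_le_div h3k).2 key
        nlinarith [pow_nonneg h0 k, sq_nonneg t, mul_nonneg (mul_nonneg (sq_nonneg t) (pow_nonneg h0 k)) (le_of_lt h3k)]
    _ = t ^ 2 / 2 * (1 / (1 - t / 3)) := by
        rw [tsum_mul_left, tsum_geometric_of_lt_one (by positivity) (by linarith)]
        rw [one_div]

lemma bernstein_opt {v ε : ℝ} (hv : 0 ≤ v) (hε : 0 ≤ ε) :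
    ∃ t, 0 ≤ t ∧ v * (Real.exp t - 1 - t) - t * ε ≤ -ε ^ 2 / (2 * v + 2 * ε / 3) := by
  rcases eq_or_lt_of_le hε with hε0 | hεpos
  · refine ⟨0, le_refl 0, ?_⟩
    simp [← hε0]
  rcases eq_or_lt_of_le hv with hv0 | hvpos
  · refine ⟨3 / 2, by norm_num, ?_⟩
    rw [← hv0]
    have : -ε ^ 2 / (2 * 0 + 2 * ε / 3) = -(3 / 2) * ε := by
      field_simp
      ring
    rw [this]
    nlinarith
  · set D := v + ε / 3 with hD
    have hDpos : 0 < D := by positivity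
    refine ⟨ε / D, by positivity, ?_⟩
    have ht3 : ε / D < 3 := by
      rw [div_lt_iff₀ hDpos]
      rw [hD]; nlinarith
    have ht0 : 0 ≤ ε / D := by positivity
    have hb := exp_bound_lt3 ht0 ht3
    have h1mt : 1 - ε / D / 3 = v / D := by
      field_simp
      ring
    have hden : 2 * v + 2 * ε / 3 = 2 * D := by rw [hD]; ring
    rw [hden]
    calc v * (Real.exp (ε / D) - 1 - ε / D) - ε / D * ε
        ≤ v * ((ε / D) ^ 2 / 2 * (1 / (1 - ε / D / 3))) - ε / D * ε := by
          have := mul_le_mul_of_nonneg_left hb hv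
          linarith
      _ = -ε ^ 2 / (2 * D) := by
          rw [h1mt]
          field_simp
          ring

lemma exp_le_quadratic_of_nonpos {y : ℝ} (hy : y ≤ 0) :
    Real.exp y ≤ 1 + y + y ^ 2 / 2 := by
  have key : AntitoneOn (fun x : ℝ => 1 + x + x ^ 2 / 2 - Real.exp x) (Set.Iic 0) := by
    apply antitoneOn_of_deriv_nonpos (convex_Iic 0)
    · fun_prop
    · intro x _
      exact DifferentiableAt.differentiableWithinAt (by fun_prop)
    · intro x hx
      have : deriv (fun x : ℝ => 1 + x + x ^ 2 / 2 - Real.exp x) x = 1 + x - Real.exp x := by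
        have h1 : HasDerivAt (fun x : ℝ => 1 + x + x ^ 2 / 2 - Real.exp x)
            (0 + 1 + 2 * x / 2 - Real.exp x) x := by
          have := ((((hasDerivAt_const x (1:ℝ)).add (hasDerivAt_id x)).add
            (((hasDerivAt_pow 2 x)).div_const 2)).sub (Real.hasDerivAt_exp x))
          exact this.congr_deriv (by norm_num)
        rw [h1.deriv]
        ring
      rw [this]
      have := Real.add_one_le_exp x
      linarith
  have := key (Set.mem_Iic.2 hy) (Set.mem_Iic.2 (le_refl 0)) hy
  simp at this
  linarith

lemma exp_scale_bound {a t : ℝ} (ha0 : 0 ≤ a) (ha1 : a ≤ 1) (ht : 0 ≤ t) :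
    Real.exp (a * t) - 1 - a * t ≤ a ^ 2 * (Real.exp t - 1 - t) := by
  rw [exp_sub_one_sub_eq, exp_sub_one_sub_eq]
  have hsum : ∀ x : ℝ, Summable (fun k : ℕ => x ^ (k + 2) / (k + 2)!) := fun x =>
    (summable_nat_add_iff 2).2 (Real.summable_pow_div_factorial x)
  rw [← tsum_mul_left]
  apply Summable.tsum_le_tsum _ (hsum _) ((hsum t).mul_left _)
  intro k
  have h1 : (a * t) ^ (k + 2) = a ^ (k + 2) * t ^ (k + 2) := by ring
  have h2 : a ^ (k + 2) ≤ a ^ 2 := pow_le_pow_of_le_one ha0 ha1 (by omega)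
  have h3 : (0:ℝ) ≤ t ^ (k + 2) / (k + 2)! := by positivity
  calc (a * t) ^ (k + 2) / (k + 2)! = a ^ (k + 2) * (t ^ (k + 2) / (k + 2)!) := by
        rw [h1]; ring
    _ ≤ a ^ 2 * (t ^ (k + 2) / (k + 2)!) := by
        exact mul_le_mul_of_nonneg_right h2 h3

lemma bernoulli_mgf_bound {p t : ℝ} (hp0 : 0 ≤ p) (hp1 : p ≤ 1) :
    (1 - p) * Real.exp (-t * p) + p * Real.exp (t * (1 - p)) ≤
      Real.exp (p * (1 - p) * (Real.exp |t| - 1 - |t|)) := by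
  -- reduce to t ≥ 0 case
  have main : ∀ q s : ℝ, 0 ≤ q → q ≤ 1 → 0 ≤ s →
      (1 - q) * Real.exp (-s * q) + q * Real.exp (s * (1 - q)) ≤
      Real.exp (q * (1 - q) * (Real.exp s - 1 - s)) := by
    intro q s hq0 hq1 hs
    set g := Real.exp s - 1 - s with hg
    have hg0 : 0 ≤ g := by
      have := Real.add_one_le_exp s
      rw [hg]; linarith
    have b1 : Real.exp (-s * q) ≤ 1 - s * q + q ^ 2 * g := by
      have hq2 : (s * q) ^ 2 / 2 ≤ q ^ 2 * g := by
        have : s ^ 2 / 2 ≤ g := by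
          have := Real.quadratic_le_exp_of_nonneg hs
          rw [hg]; linarith
        nlinarith [sq_nonneg q]
      have := exp_le_quadratic_of_nonpos (y := -s * q) (by nlinarith)
      calc Real.exp (-s * q) ≤ 1 + (-s * q) + (-s * q) ^ 2 / 2 := this
        _ = 1 - s * q + (s * q) ^ 2 / 2 := by ring
        _ ≤ 1 - s * q + q ^ 2 * g := by linarith
    have b2 : Real.exp (s * (1 - q)) ≤ 1 + s * (1 - q) + (1 - q) ^ 2 * g := by
      have := exp_scale_bound (a := 1 - q) (t := s) (by linarith) (by linarith) hs
      rw [← hg] at this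
      have he : (1 - q) * s = s * (1 - q) := by ring
      rw [he] at this
      linarith
    have hsum : (1 - q) * Real.exp (-s * q) + q * Real.exp (s * (1 - q)) ≤
        1 + q * (1 - q) * g := by
      have t1 := mul_le_mul_of_nonneg_left b1 (by linarith : (0:ℝ) ≤ 1 - q)
      have t2 := mul_le_mul_of_nonneg_left b2 hq0
      nlinarith
    calc (1 - q) * Real.exp (-s * q) + q * Real.exp (s * (1 - q))
        ≤ 1 + q * (1 - q) * g := hsum
      _ ≤ Real.exp (q * (1 - q) * g) := by
          have := Real.add_one_le_exp (q * (1 - q) * g)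
          linarith
  rcases le_or_gt 0 t with ht | ht
  · rw [abs_of_nonneg ht]
    exact main p t hp0 hp1 ht
  · rw [abs_of_neg ht]
    have h := main (1 - p) (-t) (by linarith) (by linarith) (by linarith)
    have e1 : -(-t) * (1 - p) = t * (1 - p) := by ring
    have e2 : -t * (1 - (1 - p)) = -t * p := by ring
    have e3 : (1 - (1 - p)) = p := by ring
    rw [e1, e2, e3] at h
    have e4 : p * (1 - p) = (1 - p) * p := by ring
    rw [e4]
    linarith
end AuxScalar

section AuxProb
open Real Nat

variable {Ω : Type*} [MeasurableSpace Ω] {μ : Measure Ω} [IsProbabilityMeasure μ]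

lemma bern_exp_eq {X : Ω → ℝ} (hXval : ∀ ω, X ω = 0 ∨ X ω = 1) (t : ℝ) (ω : Ω) :
    Real.exp (t * X ω) = 1 + (Real.exp t - 1) * X ω := by
  rcases hXval ω with h | h <;> simp [h]

lemma bern_integrable {X : Ω → ℝ} (hXmeas : Measurable X)
    (hXval : ∀ ω, X ω = 0 ∨ X ω = 1) : Integrable X μ := by
  have hs : MeasurableSet {ω | X ω = 1} := hXmeas (measurableSet_singleton 1)
  have hXind : X = Set.indicator {ω | X ω = 1} (fun _ => (1:ℝ)) := by
    funext ω
    rcases hXval ω with h | h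
    · simp only [Set.indicator, Set.mem_setOf_eq, h]
      norm_num
    · simp [Set.indicator, h]
  rw [hXind]
  exact (integrable_const (1:ℝ)).indicator hs

lemma bern_integral {X : Ω → ℝ} {p : ℝ} (hp0 : 0 ≤ p) (hXmeas : Measurable X)
    (hXval : ∀ ω, X ω = 0 ∨ X ω = 1) (hXid : μ {ω | X ω = 1} = ENNReal.ofReal p) :
    ∫ ω, X ω ∂μ = p := by
  have hs : MeasurableSet {ω | X ω = 1} := hXmeas (measurableSet_singleton 1)
  have hXind : X = Set.indicator {ω | X ω = 1} (fun _ => (1:ℝ)) := by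
    funext ω
    rcases hXval ω with h | h
    · simp only [Set.indicator, Set.mem_setOf_eq, h]
      norm_num
    · simp [Set.indicator, h]
  rw [hXind, integral_indicator_const _ hs, measureReal_def, hXid]
  simp [ENNReal.toReal_ofReal hp0]

lemma bern_int_exp {X : Ω → ℝ} (hXmeas : Measurable X)
    (hXval : ∀ ω, X ω = 0 ∨ X ω = 1) (t : ℝ) :
    Integrable (fun ω => Real.exp (t * X ω)) μ := by
  have : (fun ω => Real.exp (t * X ω)) = fun ω => 1 + (Real.exp t - 1) * X ω := by
    funext ω; exact bern_exp_eq hXval t ω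
  rw [this]
  exact (integrable_const 1).add ((bern_integrable hXmeas hXval).const_mul _)

lemma bern_mgf {X : Ω → ℝ} {p : ℝ} (hp0 : 0 ≤ p) (hXmeas : Measurable X)
    (hXval : ∀ ω, X ω = 0 ∨ X ω = 1) (hXid : μ {ω | X ω = 1} = ENNReal.ofReal p) (t : ℝ) :
    mgf X μ t = 1 + (Real.exp t - 1) * p := by
  rw [mgf]
  have : (fun ω => Real.exp (t * X ω)) = fun ω => 1 + (Real.exp t - 1) * X ω := by
    funext ω; exact bern_exp_eq hXval t ω
  rw [this, integral_add (integrable_const 1) ((bern_integrable hXmeas hXval).const_mul _),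
    MeasureTheory.integral_const_mul, bern_integral hp0 hXmeas hXval hXid]
  simp

section Sums
variable {Ω : Type*} [MeasurableSpace Ω] {μ : Measure Ω} [IsProbabilityMeasure μ]
  {p : ℝ} {n : ℕ} {X : ℕ → Ω → ℝ}

lemma bern_mgf_sum (hp0 : 0 ≤ p) (hXmeas : ∀ i, Measurable (X i))
    (hXval : ∀ i ω, X i ω = 0 ∨ X i ω = 1)
    (hXid : ∀ i, μ {ω | X i ω = 1} = ENNReal.ofReal p)
    (hXindep : iIndepFun X μ) (t : ℝ) :
    mgf (∑ i ∈ Finset.range n, X i) μ t = (1 + (Real.exp t - 1) * p) ^ n := by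
  rw [hXindep.mgf_sum hXmeas]
  rw [Finset.prod_congr rfl (fun i _ => bern_mgf hp0 (hXmeas i) (hXval i) (hXid i) t)]
  simp

lemma mgf_factor_le (hp0 : 0 ≤ p) (hp1 : p ≤ 1) (t : ℝ) :
    1 + (Real.exp t - 1) * p ≤
      Real.exp (t * p + p * (1 - p) * (Real.exp |t| - 1 - |t|)) := by
  have h := bernoulli_mgf_bound (t := t) hp0 hp1
  have key : 1 + (Real.exp t - 1) * p =
      Real.exp (t * p) * ((1 - p) * Real.exp (-t * p) + p * Real.exp (t * (1 - p))) := by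
    rw [mul_add, ← mul_assoc, ← mul_assoc, mul_comm (Real.exp (t*p)) (1-p),
      mul_assoc, mul_comm (Real.exp (t*p)) p, mul_assoc, ← Real.exp_add, ← Real.exp_add]
    have : t * p + -t * p = 0 := by ring
    rw [this, Real.exp_zero]
    have : t * p + t * (1 - p) = t := by ring
    rw [this]
    ring
  rw [key, Real.exp_add]
  exact mul_le_mul_of_nonneg_left h (Real.exp_nonneg _)

lemma bern_chernoff_upper (hp0 : 0 ≤ p) (hp1 : p ≤ 1)
    (hXmeas : ∀ i, Measurable (X i))
    (hXval : ∀ i ω, X i ω = 0 ∨ X i ω = 1)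
    (hXid : ∀ i, μ {ω | X i ω = 1} = ENNReal.ofReal p)
    (hXindep : iIndepFun X μ)
    {ε : ℝ} (hε : 0 ≤ ε) :
    (μ {ω | (n : ℝ) * (p + ε) ≤ (∑ i ∈ Finset.range n, X i) ω}).toReal ≤
      Real.exp (-((n : ℝ) * ε ^ 2) / (2 * p * (1 - p) + 2 * ε / 3)) := by
  obtain ⟨t, ht0, hopt⟩ := bernstein_opt (mul_nonneg hp0 (by linarith : (0:ℝ) ≤ 1 - p)) hε
  have h_int : Integrable (fun ω => Real.exp (t * (∑ i ∈ Finset.range n, X i) ω)) μ :=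
    hXindep.integrable_exp_mul_sum hXmeas (fun i _ => bern_int_exp (hXmeas i) (hXval i) t)
  have hch := measure_ge_le_exp_mul_mgf ((n : ℝ) * (p + ε)) ht0 h_int
  rw [bern_mgf_sum hp0 hXmeas hXval hXid hXindep t] at hch
  refine hch.trans ?_
  have hfac := mgf_factor_le hp0 hp1 t
  have hbase : (0:ℝ) ≤ 1 + (Real.exp t - 1) * p := by
    nlinarith [Real.exp_nonneg t]
  calc Real.exp (-t * ((n:ℝ) * (p + ε))) * (1 + (Real.exp t - 1) * p) ^ n
      ≤ Real.exp (-t * ((n:ℝ) * (p + ε))) *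
        (Real.exp (t * p + p * (1 - p) * (Real.exp |t| - 1 - |t|))) ^ n := by
        apply mul_le_mul_of_nonneg_left _ (Real.exp_nonneg _)
        exact pow_le_pow_left₀ hbase hfac n
    _ = Real.exp ((n:ℝ) * (p * (1 - p) * (Real.exp t - 1 - t) - t * ε)) := by
        rw [← Real.exp_nat_mul, ← Real.exp_add, abs_of_nonneg ht0]
        ring_nf
    _ ≤ Real.exp (-((n : ℝ) * ε ^ 2) / (2 * p * (1 - p) + 2 * ε / 3)) := by
        apply Real.exp_le_exp.2
        have hn : (0:ℝ) ≤ (n:ℝ) := Nat.cast_nonneg n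
        have e1 : -((n : ℝ) * ε ^ 2) / (2 * p * (1 - p) + 2 * ε / 3) =
            (n:ℝ) * (-ε ^ 2 / (2 * (p * (1 - p)) + 2 * ε / 3)) := by
          rw [mul_div_assoc]
          ring_nf
        rw [e1]
        exact mul_le_mul_of_nonneg_left hopt hn

lemma bern_chernoff_lower {Ω : Type*} [MeasurableSpace Ω] {μ : Measure Ω} [IsProbabilityMeasure μ]
    {p : ℝ} {n : ℕ} {X : ℕ → Ω → ℝ} (hp0 : 0 ≤ p) (hp1 : p ≤ 1)
    (hXmeas : ∀ i, Measurable (X i))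
    (hXval : ∀ i ω, X i ω = 0 ∨ X i ω = 1)
    (hXid : ∀ i, μ {ω | X i ω = 1} = ENNReal.ofReal p)
    (hXindep : iIndepFun X μ)
    {ε : ℝ} (hε : 0 ≤ ε) :
    (μ {ω | (∑ i ∈ Finset.range n, X i) ω ≤ (n : ℝ) * (p - ε)}).toReal ≤
      Real.exp (-((n : ℝ) * ε ^ 2) / (2 * p * (1 - p) + 2 * ε / 3)) := by
  obtain ⟨t, ht0, hopt⟩ := bernstein_opt (mul_nonneg hp0 (by linarith : (0:ℝ) ≤ 1 - p)) hε
  have h_int : Integrable (fun ω => Real.exp (-t * (∑ i ∈ Finset.range n, X i) ω)) μ :=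
    hXindep.integrable_exp_mul_sum hXmeas (fun i _ => bern_int_exp (hXmeas i) (hXval i) (-t))
  have hch := measure_le_le_exp_mul_mgf ((n : ℝ) * (p - ε)) (neg_nonpos.2 ht0) h_int
  rw [bern_mgf_sum hp0 hXmeas hXval hXid hXindep (-t)] at hch
  refine hch.trans ?_
  have hfac := mgf_factor_le hp0 hp1 (-t)
  rw [abs_neg, abs_of_nonneg ht0] at hfac
  have hbase : (0:ℝ) ≤ 1 + (Real.exp (-t) - 1) * p := by
    nlinarith [Real.exp_nonneg (-t)]
  calc Real.exp (- -t * ((n:ℝ) * (p - ε))) * (1 + (Real.exp (-t) - 1) * p) ^ n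
      ≤ Real.exp (- -t * ((n:ℝ) * (p - ε))) *
        (Real.exp (-t * p + p * (1 - p) * (Real.exp t - 1 - t))) ^ n := by
        apply mul_le_mul_of_nonneg_left _ (Real.exp_nonneg _)
        exact pow_le_pow_left₀ hbase hfac n
    _ = Real.exp ((n:ℝ) * (p * (1 - p) * (Real.exp t - 1 - t) - t * ε)) := by
        rw [← Real.exp_nat_mul, ← Real.exp_add]
        ring_nf
    _ ≤ Real.exp (-((n : ℝ) * ε ^ 2) / (2 * p * (1 - p) + 2 * ε / 3)) := by
        apply Real.exp_le_exp.2
        have hn : (0:ℝ) ≤ (n:ℝ) := Nat.cast_nonneg n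
        have e1 : -((n : ℝ) * ε ^ 2) / (2 * p * (1 - p) + 2 * ε / 3) =
            (n:ℝ) * (-ε ^ 2 / (2 * (p * (1 - p)) + 2 * ε / 3)) := by
          rw [mul_div_assoc]
          ring_nf
        rw [e1]
        exact mul_le_mul_of_nonneg_left hopt hn


end Sums
end AuxProb

/-- A Bernstein-type inequality for a sum of `n` i.i.d. Bernoulli(p) variables
`X₁,…,Xₙ` and `cn` arbitrary 0/1-valued variables `Y₁,…,Y_{cn}`.  With
`S_n = ∑ Xᵢ + ∑ Yᵢ`, `m = max{0, p−r}`, `M = min{1, p+r}`,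
`r' = p − m(1+c) ≥ 0` and `r'' = M(1+c) − (p+c) ≥ 0`, we have
`P( |S_n/(n(1+c)) − p| ≥ r ) ≤ exp(−n r'²/(2p(1−p)+2r'/3)) + exp(−n r''²/(2p(1−p)+2r''/3))`. -/
theorem stmt_5 {Ω : Type*} [MeasurableSpace Ω] (μ : Measure Ω) [IsProbabilityMeasure μ]
    (p : ℝ) (hp0 : 0 ≤ p) (hp1 : p ≤ 1)
    (n : ℕ) (hn : 0 < n) (c : ℝ) (hc : 0 < c) (cn : ℕ) (hcn : (cn : ℝ) = c * n)
    (X : ℕ → Ω → ℝ)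
    (hXmeas : ∀ i, Measurable (X i))
    (hXval : ∀ i ω, X i ω = 0 ∨ X i ω = 1)
    (hXid : ∀ i, μ {ω | X i ω = 1} = ENNReal.ofReal p)
    (hXindep : iIndepFun X μ)
    (Y : ℕ → Ω → ℝ)
    (hYmeas : ∀ i, Measurable (Y i))
    (hYval : ∀ i ω, Y i ω = 0 ∨ Y i ω = 1)
    (r : ℝ) (hr : 0 ≤ r)
    (hr' : 0 ≤ p - max 0 (p - r) * (1 + c))
    (hr'' : 0 ≤ min 1 (p + r) * (1 + c) - (p + c)) :
    (μ {ω | |((∑ i ∈ Finset.range n, X i ω) + ∑ i ∈ Finset.range cn, Y i ω)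
            / (n * (1 + c)) - p| ≥ r}).toReal ≤
      Real.exp (-(n * (p - max 0 (p - r) * (1 + c)) ^ 2) /
          (2 * p * (1 - p) + 2 * (p - max 0 (p - r) * (1 + c)) / 3)) +
      Real.exp (-(n * (min 1 (p + r) * (1 + c) - (p + c)) ^ 2) /
          (2 * p * (1 - p) + 2 * (min 1 (p + r) * (1 + c) - (p + c)) / 3)) := by
  classical
  set r1 := p - max 0 (p - r) * (1 + c) with hr1def
  set r2 := min 1 (p + r) * (1 + c) - (p + c) with hr2def
  set Sx : Ω → ℝ := ∑ i ∈ Finset.range n, X i with hSx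
  have hSxapp : ∀ ω, Sx ω = ∑ i ∈ Finset.range n, X i ω := by
    intro ω; rw [hSx]; simp
  set E1 := {ω | Sx ω ≤ (n : ℝ) * (p - r1)} with hE1
  set E2 := {ω | (n : ℝ) * (p + r2) ≤ Sx ω} with hE2
  have hd : (0:ℝ) < (n : ℝ) * (1 + c) := by
    have : (0:ℝ) < (n:ℝ) := by exact_mod_cast hn
    positivity
  have hsub : {ω | |((∑ i ∈ Finset.range n, X i ω) + ∑ i ∈ Finset.range cn, Y i ω)
            / (↑n * (1 + c)) - p| ≥ r} ⊆ E1 ∪ E2 := by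
    intro ω hω
    simp only [Set.mem_setOf_eq, ge_iff_le] at hω
    set sy := ∑ i ∈ Finset.range cn, Y i ω with hsy
    have hy0 : 0 ≤ sy := by
      apply Finset.sum_nonneg
      intro i _
      rcases hYval i ω with h | h <;> simp [h]
    have hy1 : sy ≤ c * n := by
      rw [← hcn]
      calc sy ≤ ∑ i ∈ Finset.range cn, (1:ℝ) := by
            apply Finset.sum_le_sum
            intro i _
            rcases hYval i ω with h | h <;> simp [h]
        _ = (cn : ℝ) := by simp
    set S := (∑ i ∈ Finset.range n, X i ω) + sy with hSdef
    have hxS : Sx ω = S - sy := by rw [hSxapp, hSdef]; ring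
    rcases le_abs.mp hω with hcase | hcase
    · -- upper tail : S/d - p ≥ r
      right
      rw [Set.mem_setOf_eq, hxS]
      have hS : (p + r) * ((n:ℝ) * (1 + c)) ≤ S := by
        rw [← le_div_iff₀ hd]
        linarith
      have hM : min 1 (p + r) ≤ p + r := min_le_right _ _
      have hr2eq : (n:ℝ) * (p + r2) = min 1 (p + r) * ((n:ℝ) * (1 + c)) - c * n := by
        rw [hr2def]; ring
      rw [hr2eq]
      have : min 1 (p + r) * ((n:ℝ) * (1 + c)) ≤ (p + r) * ((n:ℝ) * (1 + c)) :=
        mul_le_mul_of_nonneg_right hM hd.le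
      linarith
    · -- lower tail : S/d - p ≤ -r
      left
      rw [Set.mem_setOf_eq, hxS]
      have hS : S ≤ (p - r) * ((n:ℝ) * (1 + c)) := by
        rw [← div_le_iff₀ hd]
        linarith
      have hm : p - r ≤ max 0 (p - r) := le_max_right _ _
      have hr1eq : (n:ℝ) * (p - r1) = max 0 (p - r) * ((n:ℝ) * (1 + c)) := by
        rw [hr1def]; ring
      rw [hr1eq]
      have : (p - r) * ((n:ℝ) * (1 + c)) ≤ max 0 (p - r) * ((n:ℝ) * (1 + c)) :=
        mul_le_mul_of_nonneg_right hm hd.le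
      linarith
  have hmeas_le : μ {ω | |((∑ i ∈ Finset.range n, X i ω) + ∑ i ∈ Finset.range cn, Y i ω)
            / (↑n * (1 + c)) - p| ≥ r} ≤ μ E1 + μ E2 :=
    (measure_mono hsub).trans (measure_union_le _ _)
  have hfin : μ E1 + μ E2 ≠ ⊤ :=
    ENNReal.add_ne_top.2 ⟨measure_ne_top _ _, measure_ne_top _ _⟩
  calc (μ {ω | |((∑ i ∈ Finset.range n, X i ω) + ∑ i ∈ Finset.range cn, Y i ω)
            / (↑n * (1 + c)) - p| ≥ r}).toReal
      ≤ (μ E1 + μ E2).toReal := ENNReal.toReal_mono hfin hmeas_le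
    _ = (μ E1).toReal + (μ E2).toReal :=
        ENNReal.toReal_add (measure_ne_top _ _) (measure_ne_top _ _)
    _ ≤ Real.exp (-(↑n * r1 ^ 2) / (2 * p * (1 - p) + 2 * r1 / 3)) +
        Real.exp (-(↑n * r2 ^ 2) / (2 * p * (1 - p) + 2 * r2 / 3)) := by
        apply _root_.add_le_add
        · exact bern_chernoff_lower hp0 hp1 hXmeas hXval hXid hXindep hr'
        · exact bern_chernoff_upper hp0 hp1 hXmeas hXval hXid hXindep hr''
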